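/- For n ≥ 1 let T(n) denote the number of rooted binary trees with n vertices whose position map is injective. Then T(n) ≤ catalan(n) for all n ≥ 1; moreover T(n) = catalan(n) for 1 ≤ n ≤ 4, and T(n) < catalan(n) for all n ≥ 5. -/

import Mathlib

/-- A rooted binary tree: every vertex has an optional left child and an optional
right child. -/
inductive BTree : Type where
  | node : Option BTree → Option BTree → BTree

namespace BTree

/-- Number of vertices of an optional rooted binary tree. -/
def osize : Option BTree → ℕ
  | none => 0
  | some (node l r) => 1 + osize l + osize r

/-- Number of vertices of a rooted binary tree. -/
def size (t : BTree) : ℕ := osize (some t)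

/-- The multiset of positions of the vertices of an optional rooted binary tree whose
root is placed at `p`: the left (resp. right) child of a vertex at `(a,b)` is at
`(a+1,b)` (resp. `(a,b+1)`). -/
def opos : Option BTree → ℕ × ℕ → Multiset (ℕ × ℕ)
  | none, _ => 0
  | some (node l r), p => p ::ₘ (opos l (p.1 + 1, p.2) + opos r (p.1, p.2 + 1))

/-- The multiset of positions of the vertices of a rooted binary tree, the root being
placed at `(0,0)`. -/
def positions (t : BTree) : Multiset (ℕ × ℕ) := opos (some t) (0, 0)

/-- The position map of a rooted binary tree is injective. -/
def PosInjective (t : BTree) : Prop := t.positions.Nodup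

end BTree

namespace BTreeAux

open BTree

/-- conversion to Mathlib's `Tree Unit` -/
def toT : Option BTree → Tree Unit
  | none => .nil
  | some (.node l r) => .node () (toT l) (toT r)

/-- conversion from Mathlib's `Tree Unit` -/
def ofT : Tree Unit → Option BTree
  | .nil => none
  | .node _ l r => some (.node (ofT l) (ofT r))

theorem ofT_toT : ∀ o : Option BTree, ofT (toT o) = o
  | none => by simp [toT, ofT]
  | some (.node l r) => by
    simp [toT, ofT, ofT_toT l, ofT_toT r]

theorem toT_ofT : ∀ x : Tree Unit, toT (ofT x) = x
  | .nil => by simp [toT, ofT]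
  | .node _ l r => by
    simp [toT, ofT, toT_ofT l, toT_ofT r]

theorem numNodes_toT : ∀ o : Option BTree, (toT o).numNodes = osize o
  | none => by simp [toT, osize, Tree.numNodes]
  | some (.node l r) => by
    simp [toT, osize, Tree.numNodes, numNodes_toT l, numNodes_toT r]; omega

theorem toT_injective : Function.Injective toT := by
  intro a b h
  rw [← ofT_toT a, ← ofT_toT b, h]

/-- positions, on the `Tree Unit` side (kernel-computable) -/
def tpos : Tree Unit → ℕ × ℕ → Multiset (ℕ × ℕ)
  | .nil, _ => 0
  | .node _ l r, p => p ::ₘ (tpos l (p.1 + 1, p.2) + tpos r (p.1, p.2 + 1))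

theorem opos_eq_tpos : ∀ (o : Option BTree) (p : ℕ × ℕ), opos o p = tpos (toT o) p
  | none, p => by simp [opos, toT, tpos]
  | some (.node l r), p => by
    simp [opos, toT, tpos, opos_eq_tpos l, opos_eq_tpos r]

theorem opos_shift : ∀ (o : Option BTree) (p q : ℕ × ℕ),
    opos o (p.1 + q.1, p.2 + q.2) = (opos o q).map (fun r => (p.1 + r.1, p.2 + r.2))
  | none, _, _ => by simp [opos]
  | some (.node l r), p, q => by
    have hl := opos_shift l p (q.1 + 1, q.2)
    have hr := opos_shift r p (q.1, q.2 + 1)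
    simp only [opos, Multiset.map_cons, Multiset.map_add]
    simp only [show p.1 + q.1 + 1 = p.1 + (q.1 + 1) by omega,
      show p.2 + q.2 + 1 = p.2 + (q.2 + 1) by omega, hl, hr]

theorem nodup_opos_shift {o : Option BTree} {p : ℕ × ℕ}
    (h : (opos o p).Nodup) : (opos o (0, 0)).Nodup := by
  have := opos_shift o p (0, 0)
  rw [show p = (p.1 + 0, p.2 + 0) from by simp] at h
  rw [this] at h
  exact h.of_map _

/-- prepend a chain of `k` left edges above `t` -/
def chain : ℕ → BTree → BTree
  | 0, t => t
  | k + 1, t => .node (some (chain k t)) none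

theorem chain_size (k : ℕ) (t : BTree) : (chain k t).size = k + t.size := by
  induction k with
  | zero => simp [chain]
  | succ k ih =>
    show osize _ = _
    simp only [chain, osize]
    rw [show osize (some (chain k t)) = (chain k t).size from rfl, ih]
    simp only [size]
    omega

theorem chain_not_posInjective {t : BTree} (h : ¬ t.PosInjective) (k : ℕ) :
    ¬ (chain k t).PosInjective := by
  induction k with
  | zero => simpa [chain]
  | succ k ih =>
    intro hc
    apply ih
    unfold PosInjective positions at hc ⊢
    simp only [chain, opos] at hc
    have h1 : (opos (some (chain k t)) (0 + 1, 0)).Nodup := by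
      have h2 := hc.of_cons
      simpa using h2
    exact nodup_opos_shift h1

/-- the smallest tree with a position collision: vertices at
`(0,0),(1,0),(1,1),(0,1),(1,1)` -/
def cross : BTree :=
  .node (some (.node none (some (.node none none))))
        (some (.node (some (.node none none)) none))

theorem cross_size : cross.size = 5 := by
  simp [cross, size, osize]

/-- the `Tree Unit` version of `cross` -/
def crossT : Tree Unit :=
  .node () (.node () .nil (.node () .nil .nil)) (.node () (.node () .nil .nil) .nil)

theorem toT_cross : toT (some cross) = crossT := by
  simp [toT, cross, crossT]

theorem cross_not_posInjective : ¬ cross.PosInjective := by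
  unfold PosInjective positions
  rw [opos_eq_tpos, toT_cross]
  decide

/-- the list of all trees with at most `n` nodes (with repetitions allowed) -/
def tList : ℕ → List (Tree Unit)
  | 0 => [.nil]
  | n + 1 => .nil ::
      (((tList n).product (tList n)).map (fun lr => .node () lr.1 lr.2)).filter
        (fun x => x.numNodes ≤ n + 1)

theorem mem_tList : ∀ (n : ℕ) (x : Tree Unit), x.numNodes ≤ n → x ∈ tList n
  | 0, .nil, _ => by simp [tList]
  | 0, .node _ l r, h => by simp [Tree.numNodes] at h
  | n + 1, .nil, _ => by simp [tList]
  | n + 1, .node _ l r, h => by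
    simp only [Tree.numNodes, BinaryTree.numNodes] at h
    have hl : l ∈ tList n := mem_tList n l (by simp only [Tree.numNodes]; omega)
    have hr : r ∈ tList n := mem_tList n r (by simp only [Tree.numNodes]; omega)
    simp only [tList, List.mem_cons, List.mem_filter, List.mem_map]
    refine Or.inr ⟨⟨(l, r), List.pair_mem_product.mpr ⟨hl, hr⟩, rfl⟩, ?_⟩
    simp only [Tree.numNodes, BinaryTree.numNodes, decide_eq_true_eq]
    exact decide_eq_true h

theorem small_posInjective (t : BTree) (h : t.size ≤ 4) : t.PosInjective := by
  have hm : toT (some t) ∈ tList 4 := by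
    apply mem_tList
    rw [numNodes_toT]
    exact h
  have key : ∀ x ∈ tList 4, (tpos x (0, 0)).Nodup := by decide
  show (opos (some t) (0, 0)).Nodup
  rw [opos_eq_tpos]
  exact key _ hm

end BTreeAux

open BTreeAux BTree Tree in
/-- the number `T(n)` of rooted binary trees with `n` vertices and
injective position map satisfies `T(n) ≤ catalan n`, with equality for `1 ≤ n ≤ 4`
and strict inequality for `n ≥ 5`. -/
theorem injective_trees_vs_catalan (n : ℕ) (hn : 1 ≤ n) :
    Set.ncard {t : BTree | t.size = n ∧ t.PosInjective} ≤ catalan n ∧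
    (n ≤ 4 → Set.ncard {t : BTree | t.size = n ∧ t.PosInjective} = catalan n) ∧
    (5 ≤ n → Set.ncard {t : BTree | t.size = n ∧ t.PosInjective} < catalan n) := by
  classical
  set S : Set BTree := {t : BTree | t.size = n ∧ t.PosInjective} with hS
  set F : Finset (Tree Unit) :=
    (treesOfNumNodesEq n).filter (fun x => (opos (ofT x) (0, 0)).Nodup) with hF
  have himg : (fun t : BTree => toT (some t)) '' S = ↑F := by
    ext x
    constructor
    · rintro ⟨t, ⟨hts, hti⟩, rfl⟩
      simp only [hF, Finset.coe_filter, Set.mem_setOf_eq, BinaryTree.mem_treesOfNumNodesEq]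
      refine ⟨by exact (numNodes_toT _).trans hts, ?_⟩
      rw [ofT_toT]
      exact hti
    · intro hx
      simp only [hF, Finset.coe_filter, Set.mem_setOf_eq, BinaryTree.mem_treesOfNumNodesEq] at hx
      obtain ⟨hxn, hxi⟩ := hx
      obtain ⟨t, ht⟩ : ∃ t : BTree, ofT x = some t := by
        cases x with
        | nil => simp [Tree.numNodes, BinaryTree.numNodes] at hxn; omega
        | node _ l r => exact ⟨_, rfl⟩
      refine ⟨t, ⟨?_, ?_⟩, ?_⟩
      · have h1 : (toT (ofT x)).numNodes = osize (ofT x) := numNodes_toT _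
        rw [toT_ofT] at h1
        rw [show t.size = osize (ofT x) from by rw [ht]; rfl, ← h1]; exact hxn
      · show (opos (some t) (0,0)).Nodup
        rw [← ht]; exact hxi
      · show toT (some t) = x
        rw [← ht, toT_ofT]
  have hinj : Function.Injective (fun t : BTree => toT (some t)) :=
    fun a b h => by simpa using toT_injective h
  have hcardS : S.ncard = F.card := by
    rw [← Set.ncard_coe_finset, ← himg, Set.ncard_image_of_injective _ hinj]
  have hle : F.card ≤ catalan n := by
    calc F.card ≤ (treesOfNumNodesEq n).card := Finset.card_filter_le _ _
    _ = catalan n := BinaryTree.treesOfNumNodesEq_card_eq_catalan n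
  refine ⟨hcardS ▸ hle, ?_, ?_⟩
  · intro h4
    rw [hcardS, ← BinaryTree.treesOfNumNodesEq_card_eq_catalan n]
    congr 1
    rw [hF]
    apply Finset.filter_true_of_mem
    intro x hx
    rw [BinaryTree.mem_treesOfNumNodesEq] at hx
    obtain ⟨t, ht⟩ : ∃ t : BTree, ofT x = some t := by
      cases x with
      | nil => simp [Tree.numNodes, BinaryTree.numNodes] at hx; omega
      | node _ l r => exact ⟨_, rfl⟩
    have hsz : t.size ≤ 4 := by
      have h1 : (toT (ofT x)).numNodes = osize (ofT x) := numNodes_toT _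
      rw [toT_ofT] at h1
      have h2 : t.size = n := by
        rw [show t.size = osize (ofT x) from by rw [ht]; rfl, ← h1]; exact hx
      omega
    have h3 := small_posInjective t hsz
    rw [ht]
    exact h3
  · intro h5
    rw [hcardS, ← BinaryTree.treesOfNumNodesEq_card_eq_catalan n]
    apply Finset.card_lt_card
    rw [hF]
    constructor
    · exact Finset.filter_subset _ _
    · intro hsub
      set bad : BTree := chain (n - 5) cross with hbad
      have hbni : ¬ bad.PosInjective := chain_not_posInjective cross_not_posInjective _
      have hbsz : bad.size = n := by rw [hbad, chain_size, cross_size]; omega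
      have hmem : toT (some bad) ∈ treesOfNumNodesEq n := by
        rw [BinaryTree.mem_treesOfNumNodesEq]; exact (numNodes_toT _).trans hbsz
      have h6 := hsub hmem
      rw [Finset.mem_filter] at h6
      apply hbni
      have h7 := h6.2
      rw [ofT_toT] at h7
      exact h7
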